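/- Let (Ω₁, P₁) and (Ω₂, P₂) be probability spaces and let P be the product measure on Ω₁ × Ω₂. Let D be a finite set of n ≥ 2 points, let w : D → [0,1] satisfy Σ_{d ∈ D} w_d ≥ n(1 − 2ε + 2ε²) for some 0 < ε ≤ 1/2, and fix 0 < δ < 1, 0 < c < 1, and an integer k ≥ 1. For each d ∈ D let X^d : Ω₁ → [0,1] be a random variable with P₁(X^d < w_d − δ) ≤ e^{−2kδ²}, and let (U_d)_{d ∈ D} be independent random variables on Ω₂, each uniformly distributed on [0,1]. Define Y_d : Ω₁ × Ω₂ → {0,1} by Y_d(ω₁, ω₂) = 1 if U_d(ω₂) < X^d(ω₁) and 0 otherwise. Then P( Σ_{d ∈ D} Y_d ≥ n(1 − 2ε + 2ε² − δ − c) ) ≥ (1 − n e^{−2kδ²})(1 − e^{−2nc²}). -/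

import Mathlib

open MeasureTheory ProbabilityTheory Real
open scoped ENNReal

lemma bern_hoeffding (p : ℝ) (hp0 : 0 ≤ p) (hp1 : p ≤ 1) (t : ℝ) :
    p * exp t + (1 - p) ≤ exp (t * p + t ^ 2 / 8) := by
  set den : ℝ → ℝ := fun s => 1 - p + p * exp s with hden_def
  have hden_pos : ∀ s, 0 < den s := by
    intro s
    have h := exp_pos s
    have h2 : 0 ≤ p * exp s := mul_nonneg hp0 h.le
    rcases lt_or_ge p 1 with h1 | h1
    · simp only [hden_def]; linarith
    · have : p = 1 := le_antisymm hp1 h1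
      simp only [hden_def, this]; linarith
  have hden_deriv : ∀ s, HasDerivAt den (p * exp s) s := by
    intro s
    exact ((Real.hasDerivAt_exp s).const_mul p).const_add (1 - p)
  set F : ℝ → ℝ := fun s => s ^ 2 / 8 + p * s - Real.log (den s) with hF_def
  set F' : ℝ → ℝ := fun s => s / 4 + p - p * exp s / den s with hF'_def
  have hF_deriv : ∀ s, HasDerivAt F (F' s) s := by
    intro s
    have h1 : HasDerivAt (fun s : ℝ => s ^ 2 / 8 + p * s) (2 * s / 8 + p) s := by
      have := ((hasDerivAt_pow 2 s).div_const 8).add ((hasDerivAt_id' s).const_mul p)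
      refine this.congr_deriv ?_
      norm_num
    have h2 : HasDerivAt (fun s => Real.log (den s)) (p * exp s / den s) s :=
      (hden_deriv s).log (hden_pos s).ne'
    have := h1.sub h2
    refine this.congr_deriv ?_
    simp only [hF'_def]; ring
  have hF'_deriv : ∀ s, HasDerivAt F'
      (1 / 4 - (p * exp s * den s - p * exp s * (p * exp s)) / (den s) ^ 2) s := by
    intro s
    have hq : HasDerivAt (fun s => p * exp s / den s)
        ((p * exp s * den s - p * exp s * (p * exp s)) / (den s) ^ 2) s :=
      ((Real.hasDerivAt_exp s).const_mul p).div (hden_deriv s) (hden_pos s).ne'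
    have h1 : HasDerivAt (fun s : ℝ => s / 4 + p) (1 / 4) s := by
      simpa using ((hasDerivAt_id s).div_const 4).add_const p
    have := h1.sub hq
    exact this
  have hF'_nonneg : ∀ s, 0 ≤ 1 / 4 - (p * exp s * den s - p * exp s * (p * exp s)) / (den s) ^ 2 := by
    intro s
    set q : ℝ := p * exp s / den s with hq_def
    have hdpos := hden_pos s
    have key : (p * exp s * den s - p * exp s * (p * exp s)) / (den s) ^ 2 = q - q ^ 2 := by
      rw [hq_def]
      field_simp
    rw [key]
    nlinarith [sq_nonneg (q - 1 / 2)]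
  have hF'_mono : Monotone F' := by
    apply monotone_of_deriv_nonneg
    · exact fun s => (hF'_deriv s).differentiableAt
    · intro s
      rw [(hF'_deriv s).deriv]
      exact hF'_nonneg s
  have hF'_zero : F' 0 = 0 := by
    simp only [hF'_def, hden_def]
    rw [exp_zero]
    field_simp
    ring
  have hF_cont : Continuous F := by
    have : Differentiable ℝ F := fun s => (hF_deriv s).differentiableAt
    exact this.continuous
  have hF_zero : F 0 = 0 := by
    simp only [hF_def, hden_def, exp_zero]
    norm_num
  have hF_nonneg : ∀ s, 0 ≤ F s := by
    intro s
    rcases le_or_gt 0 s with hs | hs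
    · have hmono : MonotoneOn F (Set.Ici 0) := by
        apply monotoneOn_of_deriv_nonneg (convex_Ici 0) hF_cont.continuousOn
        · intro x hx
          exact (hF_deriv x).differentiableAt.differentiableWithinAt
        · intro x hx
          rw [(hF_deriv x).deriv]
          rw [interior_Ici] at hx
          have : F' 0 ≤ F' x := hF'_mono (le_of_lt hx)
          rw [hF'_zero] at this; linarith
      have := hmono (Set.self_mem_Ici) (Set.mem_Ici.mpr hs) hs
      linarith [hF_zero]
    · have hanti : AntitoneOn F (Set.Iic 0) := by
        apply antitoneOn_of_deriv_nonpos (convex_Iic 0) hF_cont.continuousOn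
        · intro x hx
          exact (hF_deriv x).differentiableAt.differentiableWithinAt
        · intro x hx
          rw [(hF_deriv x).deriv]
          rw [interior_Iic] at hx
          have : F' x ≤ F' 0 := hF'_mono (le_of_lt hx)
          rw [hF'_zero] at this; linarith
      have := hanti (Set.mem_Iic.mpr hs.le) (Set.self_mem_Iic) hs.le
      linarith [hF_zero]
  have hlog : Real.log (den t) ≤ t ^ 2 / 8 + p * t := by
    have := hF_nonneg t
    simp only [hF_def] at this
    linarith
  have : den t ≤ exp (t ^ 2 / 8 + p * t) := by
    calc den t = exp (Real.log (den t)) := (exp_log (hden_pos t)).symm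
    _ ≤ exp (t ^ 2 / 8 + p * t) := exp_le_exp.mpr hlog
  calc p * exp t + (1 - p) = den t := by simp only [hden_def]; ring
  _ ≤ exp (t ^ 2 / 8 + p * t) := this
  _ = exp (t * p + t ^ 2 / 8) := by ring_nf

lemma chernoff_sum_indicators {Ω₂ ι : Type*} [MeasurableSpace Ω₂] [Fintype ι]
    (P₂ : Measure Ω₂) [IsProbabilityMeasure P₂]
    (U : ι → Ω₂ → ℝ) (hUmeas : ∀ d, Measurable (U d))
    (hUindep : iIndepFun U P₂)
    (hUunif : ∀ d, Measure.map (U d) P₂ = volume.restrict (Set.Icc (0 : ℝ) 1))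
    (x : ι → ℝ) (hx : ∀ d, x d ∈ Set.Icc (0 : ℝ) 1) (c : ℝ) (hc0 : 0 < c) :
    P₂ {ω | (∑ d, (if U d ω < x d then (1:ℝ) else 0)) ≤ ∑ d, x d - (Fintype.card ι : ℝ) * c}
      ≤ ENNReal.ofReal (exp (-2 * (Fintype.card ι : ℝ) * c ^ 2)) := by
  classical
  set n : ℕ := Fintype.card ι with hn_def
  set t : ℝ := -(4 * c) with ht_def
  have ht_nonpos : t ≤ 0 := by simp [ht_def]; linarith
  set Z : ι → Ω₂ → ℝ := fun d ω => if U d ω < x d then (1:ℝ) else 0 with hZ_def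
  have hSd : ∀ d, MeasurableSet {ω | U d ω < x d} := fun d =>
    measurableSet_lt (hUmeas d) measurable_const
  have hZmeas : ∀ d, Measurable (Z d) := fun d =>
    Measurable.ite (hSd d) measurable_const measurable_const
  have hZindep : iIndepFun Z P₂ := by
    have hg : ∀ d, Measurable (fun u : ℝ => if u < x d then (1:ℝ) else 0) := fun d =>
      Measurable.ite measurableSet_Iio measurable_const measurable_const
    exact hUindep.comp _ hg
  have hPd : ∀ d, P₂ {ω | U d ω < x d} = ENNReal.ofReal (x d) := by
    intro d
    have h1 : {ω | U d ω < x d} = U d ⁻¹' Set.Iio (x d) := rfl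
    rw [h1, ← Measure.map_apply (hUmeas d) measurableSet_Iio, hUunif d,
      Measure.restrict_apply measurableSet_Iio]
    have h2 : Set.Iio (x d) ∩ Set.Icc 0 1 = Set.Ico 0 (x d) := by
      ext u
      simp only [Set.mem_inter_iff, Set.mem_Iio, Set.mem_Icc, Set.mem_Ico]
      constructor
      · rintro ⟨h1, h2, h3⟩; exact ⟨h2, h1⟩
      · rintro ⟨h1, h2⟩; exact ⟨h2, h1, le_of_lt (lt_of_lt_of_le h2 (hx d).2)⟩
    rw [h2, Real.volume_Ico, sub_zero]
  have heq : ∀ d, (fun ω => exp (t * Z d ω)) =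
      fun ω => ({ω | U d ω < x d}).indicator (fun _ => exp t - 1) ω + 1 := by
    intro d
    funext ω
    by_cases h : U d ω < x d
    · simp [hZ_def, h, Set.indicator_of_mem, Set.mem_setOf_eq]
    · simp [hZ_def, h, Set.indicator_of_notMem, Set.mem_setOf_eq]
  have hint : ∀ d, Integrable (fun ω => exp (t * Z d ω)) P₂ := by
    intro d
    rw [heq d]
    exact (((integrable_const (exp t - 1)).indicator (hSd d))).add (integrable_const 1)
  have hmgf : ∀ d, mgf (Z d) P₂ t = x d * exp t + (1 - x d) := by
    intro d
    rw [mgf]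
    rw [heq d]
    rw [integral_add ((integrable_const (exp t - 1)).indicator (hSd d)) (integrable_const 1)]
    rw [integral_indicator_const _ (hSd d), integral_const]
    simp only [measureReal_def, measure_univ, ENNReal.toReal_one, one_smul, smul_eq_mul, hPd d,
      ENNReal.toReal_ofReal (hx d).1]
    ring
  set m : ℝ := ∑ d, x d with hm_def
  have hmgfS : mgf (∑ d, Z d) P₂ t = ∏ d, mgf (Z d) P₂ t :=
    hZindep.mgf_sum hZmeas Finset.univ
  have hintS : Integrable (fun ω => exp (t * (∑ d, Z d) ω)) P₂ :=
    hZindep.integrable_exp_mul_sum hZmeas (fun d _ => hint d)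
  have hprod : mgf (∑ d, Z d) P₂ t ≤ exp (t * m + n * (t ^ 2 / 8)) := by
    rw [hmgfS]
    calc ∏ d, mgf (Z d) P₂ t ≤ ∏ d, exp (t * x d + t ^ 2 / 8) := by
          apply Finset.prod_le_prod
          · intro d _
            rw [hmgf d]
            nlinarith [exp_pos t, (hx d).1, (hx d).2]
          · intro d _
            rw [hmgf d]
            exact bern_hoeffding (x d) (hx d).1 (hx d).2 t
    _ = exp (∑ d, (t * x d + t ^ 2 / 8)) := (Real.exp_sum _ _).symm
    _ = exp (t * m + n * (t ^ 2 / 8)) := by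
          congr 1
          rw [Finset.sum_add_distrib, ← Finset.mul_sum, Finset.sum_const, Finset.card_univ]
          simp [hm_def, nsmul_eq_mul, hn_def]
  have hcher : (P₂ {ω | (∑ d, Z d) ω ≤ m - n * c}).toReal ≤ exp (-2 * (n : ℝ) * c ^ 2) := by
    calc (P₂ {ω | (∑ d, Z d) ω ≤ m - n * c}).toReal
        ≤ exp (-t * (m - n * c)) * mgf (∑ d, Z d) P₂ t :=
          measure_le_le_exp_mul_mgf (m - n * c) ht_nonpos hintS
    _ ≤ exp (-t * (m - n * c)) * exp (t * m + n * (t ^ 2 / 8)) := by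
          exact mul_le_mul_of_nonneg_left hprod (exp_pos _).le
    _ = exp (-t * (m - n * c) + (t * m + n * (t ^ 2 / 8))) := (exp_add _ _).symm
    _ = exp (-2 * (n : ℝ) * c ^ 2) := by
          congr 1
          simp only [ht_def]
          ring
  have hset : {ω | (∑ d, (if U d ω < x d then (1:ℝ) else 0)) ≤ m - n * c} =
      {ω | (∑ d, Z d) ω ≤ m - n * c} := by
    ext ω
    simp only [Set.mem_setOf_eq, Finset.sum_apply, hZ_def]
  rw [hset]
  rw [← ENNReal.ofReal_toReal (measure_ne_top P₂ _)]
  exact ENNReal.ofReal_le_ofReal hcher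


/-- empirical error bound for the probabilistic averaging scheme.
`Ω₁` carries the forest randomness, `Ω₂` the classification tosses; `X d` is the average
score of point `d` over the forest (satisfying a Hoeffding-type deviation bound from the
weight `w d`), `U d` are independent uniform-on-`[0,1]` tosses, and point `d` is correctly
classified when `U d < X d`. Then with probability (w.r.t. the product measure) at least
`(1 - n e^{-2kδ²})(1 - e^{-2nc²})`, at least `n(1 - 2ε + 2ε² - δ - c)` points are
correctly classified. -/
theorem empirical_error_probabilistic_averaging
    {Ω₁ Ω₂ ι : Type*} [MeasurableSpace Ω₁] [MeasurableSpace Ω₂]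
    (P₁ : Measure Ω₁) (P₂ : Measure Ω₂)
    [IsProbabilityMeasure P₁] [IsProbabilityMeasure P₂]
    [Fintype ι] (hn : 2 ≤ Fintype.card ι)
    (w : ι → ℝ) (hw : ∀ d, w d ∈ Set.Icc (0 : ℝ) 1)
    (ε : ℝ) (hε0 : 0 < ε) (hε : ε ≤ 1 / 2)
    (hsum : ∑ d, w d ≥ (Fintype.card ι : ℝ) * (1 - 2 * ε + 2 * ε ^ 2))
    (δ c : ℝ) (hδ0 : 0 < δ) (hδ : δ < 1) (hc0 : 0 < c) (hc : c < 1)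
    (k : ℕ) (hk : 1 ≤ k)
    (X : ι → Ω₁ → ℝ)
    (hXmeas : ∀ d, Measurable (X d))
    (hXrange : ∀ d ω, X d ω ∈ Set.Icc (0 : ℝ) 1)
    (hXdev : ∀ d, P₁ {ω | X d ω < w d - δ} ≤ ENNReal.ofReal (exp (-2 * k * δ ^ 2)))
    (U : ι → Ω₂ → ℝ)
    (hUmeas : ∀ d, Measurable (U d))
    (hUindep : iIndepFun U P₂)
    (hUunif : ∀ d, Measure.map (U d) P₂ = volume.restrict (Set.Icc (0 : ℝ) 1)) :
    (P₁.prod P₂) {p | (Fintype.card ι : ℝ) * (1 - 2 * ε + 2 * ε ^ 2 - δ - c) ≤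
        ∑ d, (if U d p.2 < X d p.1 then (1 : ℝ) else 0)} ≥
      ENNReal.ofReal ((1 - (Fintype.card ι : ℝ) * exp (-2 * k * δ ^ 2)) *
        (1 - exp (-2 * (Fintype.card ι : ℝ) * c ^ 2))) := by
  classical
  set n : ℕ := Fintype.card ι with hn_def
  set thr : ℝ := (n : ℝ) * (1 - 2 * ε + 2 * ε ^ 2 - δ - c) with hthr_def
  set E : Set (Ω₁ × Ω₂) :=
    {p | thr ≤ ∑ d, (if U d p.2 < X d p.1 then (1 : ℝ) else 0)} with hE_def
  have hE : MeasurableSet E := by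
    apply measurableSet_le measurable_const
    apply Finset.measurable_sum
    intro d _
    exact Measurable.ite
      (measurableSet_lt ((hUmeas d).comp measurable_snd) ((hXmeas d).comp measurable_fst))
      measurable_const measurable_const
  set A : Set Ω₁ := ⋂ d, {ω | w d - δ ≤ X d ω} with hA_def
  have hA : MeasurableSet A :=
    MeasurableSet.iInter fun d => measurableSet_le measurable_const (hXmeas d)
  -- union bound on Ω₁
  have hAc : P₁ Aᶜ ≤ (n : ℝ≥0∞) * ENNReal.ofReal (exp (-2 * k * δ ^ 2)) := by
    have h1 : Aᶜ = ⋃ d, {ω | X d ω < w d - δ} := by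
      rw [hA_def, Set.compl_iInter]
      apply Set.iUnion_congr
      intro d
      ext ω
      simp only [Set.mem_compl_iff, Set.mem_setOf_eq, not_le]
    rw [h1]
    calc P₁ (⋃ d, {ω | X d ω < w d - δ}) ≤ ∑ d, P₁ {ω | X d ω < w d - δ} :=
          measure_iUnion_fintype_le _ _
    _ ≤ ∑ _d : ι, ENNReal.ofReal (exp (-2 * k * δ ^ 2)) := Finset.sum_le_sum fun d _ => hXdev d
    _ = (n : ℝ≥0∞) * ENNReal.ofReal (exp (-2 * k * δ ^ 2)) := by
          rw [Finset.sum_const, Finset.card_univ, nsmul_eq_mul, hn_def]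
  have hPA : 1 - (n : ℝ≥0∞) * ENNReal.ofReal (exp (-2 * k * δ ^ 2)) ≤ P₁ A := by
    rw [tsub_le_iff_right]
    calc (1 : ℝ≥0∞) = P₁ A + P₁ Aᶜ := by rw [measure_add_measure_compl hA]; simp
    _ ≤ P₁ A + (n : ℝ≥0∞) * ENNReal.ofReal (exp (-2 * k * δ ^ 2)) := add_le_add_right hAc _
  -- slice bound
  set b : ℝ≥0∞ := ENNReal.ofReal (1 - exp (-2 * (n : ℝ) * c ^ 2)) with hb_def
  have key : ∀ ω₁ ∈ A, b ≤ P₂ (Prod.mk ω₁ ⁻¹' E) := by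
    intro ω₁ hω₁
    have hpre : Prod.mk ω₁ ⁻¹' E =
        {ω₂ | thr ≤ ∑ d, (if U d ω₂ < X d ω₁ then (1 : ℝ) else 0)} := rfl
    rw [hpre]
    set T : Set Ω₂ := {ω₂ | thr ≤ ∑ d, (if U d ω₂ < X d ω₁ then (1 : ℝ) else 0)} with hT_def
    have hT : MeasurableSet T := by
      apply measurableSet_le measurable_const
      apply Finset.measurable_sum
      intro d _
      exact Measurable.ite (measurableSet_lt (hUmeas d) measurable_const)
        measurable_const measurable_const
    have hxw : ∀ d, w d - δ ≤ X d ω₁ := fun d => Set.mem_iInter.mp hω₁ d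
    have hm : (n : ℝ) * (1 - 2 * ε + 2 * ε ^ 2 - δ) ≤ ∑ d, X d ω₁ := by
      calc (n : ℝ) * (1 - 2 * ε + 2 * ε ^ 2 - δ)
          = (n : ℝ) * (1 - 2 * ε + 2 * ε ^ 2) - (n : ℝ) * δ := by ring
      _ ≤ ∑ d, w d - ∑ _d : ι, δ := by
            rw [Finset.sum_const, Finset.card_univ, nsmul_eq_mul]
            exact sub_le_sub hsum le_rfl
      _ = ∑ d, (w d - δ) := by rw [Finset.sum_sub_distrib]
      _ ≤ ∑ d, X d ω₁ := Finset.sum_le_sum fun d _ => hxw d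
    have hcompl : P₂ Tᶜ ≤ ENNReal.ofReal (exp (-2 * (n : ℝ) * c ^ 2)) := by
      have hsub : Tᶜ ⊆ {ω₂ | (∑ d, (if U d ω₂ < X d ω₁ then (1:ℝ) else 0)) ≤
          ∑ d, X d ω₁ - (n : ℝ) * c} := by
        intro ω₂ hω₂
        simp only [hT_def, Set.mem_compl_iff, Set.mem_setOf_eq, not_le] at hω₂
        simp only [Set.mem_setOf_eq]
        have : thr ≤ ∑ d, X d ω₁ - (n : ℝ) * c := by
          simp only [hthr_def]; linarith
        linarith
      calc P₂ Tᶜ ≤ P₂ {ω₂ | (∑ d, (if U d ω₂ < X d ω₁ then (1:ℝ) else 0)) ≤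
            ∑ d, X d ω₁ - (n : ℝ) * c} := measure_mono hsub
      _ ≤ ENNReal.ofReal (exp (-2 * (n : ℝ) * c ^ 2)) :=
            chernoff_sum_indicators P₂ U hUmeas hUindep hUunif (fun d => X d ω₁)
              (fun d => hXrange d ω₁) c hc0
    have : (1 : ℝ≥0∞) ≤ P₂ T + ENNReal.ofReal (exp (-2 * (n : ℝ) * c ^ 2)) := by
      calc (1 : ℝ≥0∞) = P₂ T + P₂ Tᶜ := by rw [measure_add_measure_compl hT]; simp
      _ ≤ _ := add_le_add_right hcompl _
    calc b ≤ 1 - ENNReal.ofReal (exp (-2 * (n : ℝ) * c ^ 2)) := by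
          rw [hb_def, ENNReal.ofReal_sub _ (exp_pos _).le, ENNReal.ofReal_one]
    _ ≤ P₂ T := by rw [tsub_le_iff_right]; exact this
  -- Fubini
  rw [ge_iff_le, Measure.prod_apply hE]
  calc ENNReal.ofReal ((1 - (n : ℝ) * exp (-2 * k * δ ^ 2)) * (1 - exp (-2 * (n : ℝ) * c ^ 2)))
      = ENNReal.ofReal ((1 - exp (-2 * (n : ℝ) * c ^ 2)) * (1 - (n : ℝ) * exp (-2 * k * δ ^ 2)))
        := by rw [mul_comm]
  _ = b * ENNReal.ofReal (1 - (n : ℝ) * exp (-2 * k * δ ^ 2)) := by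
        rw [ENNReal.ofReal_mul]
        have : exp (-2 * (n : ℝ) * c ^ 2) < 1 := by
          rw [exp_lt_one_iff]
          have hn2 : (0:ℝ) < (n : ℝ) * c ^ 2 := by
            have : (0:ℝ) < (n : ℝ) := by
              have : 0 < n := lt_of_lt_of_le (by norm_num) hn
              exact_mod_cast this
            positivity
          linarith
        linarith
  _ ≤ b * (1 - (n : ℝ≥0∞) * ENNReal.ofReal (exp (-2 * k * δ ^ 2))) := by
        apply mul_le_mul_right
        rw [ENNReal.ofReal_sub _ (by positivity), ENNReal.ofReal_one, ENNReal.ofReal_mul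
          (by positivity)]
        simp
  _ ≤ b * P₁ A := mul_le_mul_right hPA _
  _ = ∫⁻ _ω₁ in A, b ∂P₁ := by rw [setLIntegral_const, mul_comm]
  _ ≤ ∫⁻ ω₁ in A, P₂ (Prod.mk ω₁ ⁻¹' E) ∂P₁ :=
        setLIntegral_mono (measurable_measure_prodMk_left hE) key
  _ ≤ ∫⁻ ω₁, P₂ (Prod.mk ω₁ ⁻¹' E) ∂P₁ := setLIntegral_le_lintegral _ _
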